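/- Let μ be supported on ℤ⁺, μ' on ℤ⁻, U'(-k) = Σ_{n≥0} (μ')^{*n}(-k), and ρ(n) = Σ_{k≥1} μ'(-k) μ([n+1, n+k]) for n ≥ 0. Then for every n ≥ 0, Σ_{k=0}^∞ U'(-k) ρ(n+k) = μ([n+1, ∞[). -/

import Mathlib

open Function ENNReal Filter


/-- With `μ` supported on ℤ⁺, `μ'` on ℤ⁻, `U'(-k) = ∑_{n≥0} (μ')^{*n}(-k)` the potential
kernel of the `μ'`-walk, and `ρ(n) = ∑_{k≥1} μ'(-k) μ([n+1,n+k])` for `n ≥ 0`, one has,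
for every `n ≥ 0`, `∑_{k≥0} U'(-k) ρ(n+k) = μ([n+1,∞[)`. -/
theorem stmt_14 (μ μ' : ℤ → ℝ)
    (hμpos : ∀ k, 0 ≤ μ k) (hμ'pos : ∀ k, 0 ≤ μ' k)
    (hμmass : ∑' k : ℤ, μ k = 1) (hμ'mass : ∑' k : ℤ, μ' k = 1)
    (hμsupp : ∀ k : ℤ, k ≤ 0 → μ k = 0) (hμ'supp : ∀ k : ℤ, 0 ≤ k → μ' k = 0)
    (μ'n : ℕ → ℤ → ℝ)
    (hμ'n0 : ∀ t : ℤ, μ'n 0 t = if t = 0 then 1 else 0)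
    (hμ'nS : ∀ n : ℕ, ∀ t : ℤ, μ'n (n + 1) t = ∑' k : ℤ, μ'n n k * μ' (t - k))
    (U' : ℤ → ℝ) (hU' : ∀ t : ℤ, U' t = ∑' n : ℕ, μ'n n t)
    (ρ : ℤ → ℝ)
    (hρ : ∀ n : ℤ, 0 ≤ n → ρ n = ∑' k : ℕ,
      μ' (-(k : ℤ) - 1) * ∑ j ∈ Finset.Icc (n + 1) (n + (k : ℤ) + 1), μ j) :
    ∀ n : ℕ,
      (∑' k : ℕ, U' (-(k : ℤ)) * ρ ((n : ℤ) + k)) = ∑' j : ℕ, μ ((n : ℤ) + 1 + j) := by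
  intro n
  -- basic summability
  have hμsum : Summable μ := by
    by_contra h; rw [tsum_eq_zero_of_not_summable h] at hμmass; norm_num at hμmass
  have hμ'sum : Summable μ' := by
    by_contra h; rw [tsum_eq_zero_of_not_summable h] at hμ'mass; norm_num at hμ'mass
  set m : ℤ → ℝ≥0∞ := fun k => ENNReal.ofReal (μ k) with hm
  set m' : ℤ → ℝ≥0∞ := fun k => ENNReal.ofReal (μ' k) with hm'
  have hmmass : ∑' k : ℤ, m k = 1 := by
    rw [← ENNReal.ofReal_tsum_of_nonneg hμpos hμsum, hμmass, ENNReal.ofReal_one]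
  have hm'mass : ∑' k : ℤ, m' k = 1 := by
    rw [← ENNReal.ofReal_tsum_of_nonneg hμ'pos hμ'sum, hμ'mass, ENNReal.ofReal_one]
  have hm'le1 : ∀ k, m' k ≤ 1 := fun k => hm'mass ▸ ENNReal.le_tsum k
  -- shifted mass of m'
  have hm'shift : ∀ c : ℤ, ∑' t : ℤ, m' (t - c) = 1 := by
    intro c
    rw [← hm'mass]
    exact (Equiv.subRight c).tsum_eq m'
  set N : ℕ → ℤ → ℝ≥0∞ := fun q t => ENNReal.ofReal (μ'n q t) with hN
  -- invariant by induction
  have key : ∀ q : ℕ, (∀ t, 0 ≤ μ'n q t) ∧ (∀ t : ℤ, -(q : ℤ) < t → μ'n q t = 0) ∧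
      (∑' t : ℤ, N q t ≤ 1) := by
    intro q
    induction q with
    | zero =>
      refine ⟨fun t => by rw [hμ'n0]; split <;> norm_num,
        fun t ht => by rw [hμ'n0, if_neg (by omega)], ?_⟩
      have : ∀ t : ℤ, N 0 t = if t = 0 then 1 else 0 := by
        intro t; simp only [hN, hμ'n0]; split <;> simp
      calc ∑' t : ℤ, N 0 t = ∑' t : ℤ, if t = 0 then (1:ℝ≥0∞) else 0 := tsum_congr this
        _ = 1 := by rw [tsum_eq_single 0 (fun b hb => if_neg hb)]; simp
        _ ≤ 1 := le_rfl
    | succ q ih =>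
      obtain ⟨hpos, hsupp, hmass⟩ := ih
      have hposS : ∀ t, 0 ≤ μ'n (q+1) t := by
        intro t; rw [hμ'nS]
        exact tsum_nonneg fun k => mul_nonneg (hpos k) (hμ'pos _)
      have hsummand : ∀ t k : ℤ, ENNReal.ofReal (μ'n q k * μ' (t - k)) = N q k * m' (t - k) := by
        intro t k; rw [ENNReal.ofReal_mul (hpos k)]
      -- summability of the convolution in ℝ
      have hsumm : ∀ t : ℤ, Summable fun k : ℤ => μ'n q k * μ' (t - k) := by
        intro t
        have hfin : ∑' k : ℤ, N q k * m' (t - k) ≠ ∞ := by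
          refine ne_top_of_le_ne_top one_ne_top ?_
          calc ∑' k : ℤ, N q k * m' (t - k) ≤ ∑' k : ℤ, N q k * 1 :=
              ENNReal.tsum_le_tsum fun k => mul_le_mul_right (hm'le1 _) _
            _ = ∑' k : ℤ, N q k := by simp
            _ ≤ 1 := hmass
        have := ENNReal.summable_toReal (f := fun k : ℤ => N q k * m' (t - k)) hfin
        refine this.congr fun k => ?_
        rw [← hsummand t k, ENNReal.toReal_ofReal (mul_nonneg (hpos k) (hμ'pos _))]
      have hrec : ∀ t : ℤ, N (q+1) t = ∑' k : ℤ, N q k * m' (t - k) := by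
        intro t
        simp only [hN]
        rw [hμ'nS, ENNReal.ofReal_tsum_of_nonneg
          (fun k => mul_nonneg (hpos k) (hμ'pos _)) (hsumm t)]
        exact tsum_congr fun k => hsummand t k
      refine ⟨hposS, ?_, ?_⟩
      · intro t ht
        rw [hμ'nS]
        have : ∀ k : ℤ, μ'n q k * μ' (t - k) = 0 := by
          intro k
          by_cases hk : μ'n q k = 0
          · rw [hk, zero_mul]
          · have hkle : k ≤ -(q : ℤ) := by
              by_contra h; exact hk (hsupp k (by omega))
            rw [hμ'supp (t - k) (by omega), mul_zero]
        simp [this]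
      · calc ∑' t : ℤ, N (q+1) t = ∑' t : ℤ, ∑' k : ℤ, N q k * m' (t - k) :=
            tsum_congr fun t => hrec t
          _ = ∑' k : ℤ, ∑' t : ℤ, N q k * m' (t - k) := ENNReal.tsum_comm
          _ = ∑' k : ℤ, N q k * ∑' t : ℤ, m' (t - k) :=
            tsum_congr fun k => ENNReal.tsum_mul_left
          _ = ∑' k : ℤ, N q k := by simp [hm'shift]
          _ ≤ 1 := hmass
  obtain ⟨hNpos, hNsupp, hNmass⟩ :
      (∀ q : ℕ, ∀ t, 0 ≤ μ'n q t) ∧ (∀ q : ℕ, ∀ t : ℤ, -(q : ℤ) < t → μ'n q t = 0) ∧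
      (∀ q : ℕ, ∑' t : ℤ, N q t ≤ 1) :=
    ⟨fun q => (key q).1, fun q => (key q).2.1, fun q => (key q).2.2⟩
  have hsummand : ∀ q : ℕ, ∀ t k : ℤ, ENNReal.ofReal (μ'n q k * μ' (t - k)) = N q k * m' (t - k) := by
    intro q t k; rw [ENNReal.ofReal_mul (hNpos q k)]
  have hNrec : ∀ q : ℕ, ∀ t : ℤ, N (q+1) t = ∑' k : ℤ, N q k * m' (t - k) := by
    intro q t
    have hsumm : Summable fun k : ℤ => μ'n q k * μ' (t - k) := by
      have hfin : ∑' k : ℤ, N q k * m' (t - k) ≠ ∞ := by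
        refine ne_top_of_le_ne_top one_ne_top ?_
        calc ∑' k : ℤ, N q k * m' (t - k) ≤ ∑' k : ℤ, N q k * 1 :=
            ENNReal.tsum_le_tsum fun k => mul_le_mul_right (hm'le1 _) _
          _ = ∑' k : ℤ, N q k := by simp
          _ ≤ 1 := hNmass q
      have := ENNReal.summable_toReal (f := fun k : ℤ => N q k * m' (t - k)) hfin
      refine this.congr fun k => ?_
      rw [← hsummand q t k, ENNReal.toReal_ofReal (mul_nonneg (hNpos q k) (hμ'pos _))]
    simp only [hN]
    rw [hμ'nS, ENNReal.ofReal_tsum_of_nonneg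
      (fun k => mul_nonneg (hNpos q k) (hμ'pos _)) hsumm]
    exact tsum_congr fun k => hsummand q t k
  -- the tail function T
  obtain ⟨T, hT⟩ : ∃ T : ℕ → ℝ≥0∞, ∀ k, T k = ∑' j : ℕ, m ((n : ℤ) + 1 + k + j) :=
    ⟨_, fun k => rfl⟩
  have hTle1 : ∀ k, T k ≤ 1 := by
    intro k
    rw [hT]
    calc (∑' j : ℕ, m ((n : ℤ) + 1 + k + j)) ≤ ∑' t : ℤ, m t := by
          refine tsum_comp_le_tsum_of_injective (f := fun j : ℕ => (n : ℤ) + 1 + k + j) ?_ m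
          intro a b hab
          simpa using hab
      _ = 1 := hmmass
  have hTsplit : ∀ k j : ℕ, T k =
      (∑ i ∈ Finset.range (j+1), m ((n : ℤ) + 1 + k + i)) + T (k + j + 1) := by
    intro k j
    rw [hT, hT]
    rw [← Summable.sum_add_tsum_nat_add' (f := fun i : ℕ => m ((n : ℤ) + 1 + k + i)) (k := j+1)
      ENNReal.summable]
    congr 1
    refine tsum_congr fun i => ?_
    congr 1
    push_cast
    ring
  have hTanti : ∀ M k : ℕ, M ≤ k → T k ≤ T M := by
    intro M k hMk
    obtain ⟨d, rfl⟩ := Nat.exists_eq_add_of_le hMk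
    cases d with
    | zero => simp
    | succ j =>
      have := hTsplit M j
      rw [show M + (j+1) = M + j + 1 by ring, this]
      exact le_add_self
  have hTtendsto : Tendsto T atTop (nhds 0) := by
    have h0 : ∑' j : ℕ, m ((n : ℤ) + 1 + j) ≠ ∞ := by
      refine ne_top_of_le_ne_top one_ne_top ?_
      calc ∑' j : ℕ, m ((n : ℤ) + 1 + j) ≤ ∑' t : ℤ, m t := by
            refine tsum_comp_le_tsum_of_injective (f := fun j : ℕ => (n : ℤ) + 1 + j) ?_ m
            intro a b hab; simpa using hab
        _ = 1 := hmmass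
    have := ENNReal.tendsto_sum_nat_add (fun j : ℕ => m ((n : ℤ) + 1 + j)) h0
    refine this.congr fun k => ?_
    rw [hT]
    refine tsum_congr fun j => ?_
    congr 1
    push_cast
    ring
  -- Icc to range reindex
  have hIcc : ∀ a : ℤ, ∀ c : ℕ, (∑ j ∈ Finset.Icc (a + 1) (a + (c : ℤ) + 1), μ j)
      = ∑ i ∈ Finset.range (c + 1), μ (a + 1 + i) := by
    intro a c
    have hmap : Finset.Icc (a + 1) (a + (c : ℤ) + 1) =
        Finset.map ⟨fun i : ℕ => a + 1 + i, fun x y h => by simpa using h⟩ (Finset.range (c + 1)) := by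
      ext x
      simp only [Finset.mem_Icc, Finset.mem_map, Finset.mem_range, Function.Embedding.coeFn_mk, DFunLike.coe]
      constructor
      · rintro ⟨h1, h2⟩
        exact ⟨(x - (a + 1)).toNat, by omega, by omega⟩
      · rintro ⟨i, hi, rfl⟩
        omega
    rw [hmap, Finset.sum_map]
    rfl
  -- R : lifted rho
  obtain ⟨R, hRdef⟩ : ∃ R : ℕ → ℝ≥0∞, ∀ k : ℕ, R k = ∑' j : ℕ,
      m' (-(j : ℤ) - 1) * ∑ i ∈ Finset.range (j + 1), m ((n : ℤ) + 1 + k + i) :=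
    ⟨_, fun _ => rfl⟩
  have hμ'comp : Summable fun j : ℕ => μ' (-(j : ℤ) - 1) :=
    hμ'sum.comp_injective fun a b h => by simpa using h
  have hρnn : ∀ k : ℕ, ∀ j : ℕ,
      0 ≤ μ' (-(j : ℤ) - 1) * ∑ i ∈ Finset.Icc ((n : ℤ) + k + 1) ((n : ℤ) + k + (j : ℤ) + 1), μ i :=
    fun k j => mul_nonneg (hμ'pos _) (Finset.sum_nonneg fun i _ => hμpos i)
  have hρsm : ∀ k : ℕ, Summable fun j : ℕ =>
      μ' (-(j : ℤ) - 1) * ∑ i ∈ Finset.Icc ((n : ℤ) + k + 1) ((n : ℤ) + k + (j : ℤ) + 1), μ i := by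
    intro k
    refine Summable.of_nonneg_of_le (hρnn k) (fun j => ?_) hμ'comp
    calc μ' (-(j : ℤ) - 1) * ∑ i ∈ Finset.Icc ((n : ℤ) + k + 1) ((n : ℤ) + k + (j : ℤ) + 1), μ i
        ≤ μ' (-(j : ℤ) - 1) * 1 := by
          refine mul_le_mul_of_nonneg_left ?_ (hμ'pos _)
          calc (∑ i ∈ Finset.Icc ((n : ℤ) + k + 1) ((n : ℤ) + k + (j : ℤ) + 1), μ i)
              ≤ ∑' i : ℤ, μ i := Summable.sum_le_tsum _ (fun i _ => hμpos i) hμsum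
            _ = 1 := hμmass
      _ = μ' (-(j : ℤ) - 1) := mul_one _
  have hρpos : ∀ k : ℕ, 0 ≤ ρ ((n : ℤ) + k) := by
    intro k
    rw [hρ ((n : ℤ) + k) (by positivity)]
    exact tsum_nonneg fun j => hρnn k j
  have hRlift : ∀ k : ℕ, ENNReal.ofReal (ρ ((n : ℤ) + k)) = R k := by
    intro k
    rw [hρ ((n : ℤ) + k) (by positivity), hRdef,
      ENNReal.ofReal_tsum_of_nonneg (hρnn k) (hρsm k)]
    refine tsum_congr fun j => ?_
    have hIccj : (∑ i ∈ Finset.Icc ((n : ℤ) + k + 1) ((n : ℤ) + k + (j : ℤ) + 1), μ i)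
        = ∑ i ∈ Finset.range (j + 1), μ ((n : ℤ) + 1 + k + i) := by
      rw [hIcc ((n : ℤ) + k) j]
      exact Finset.sum_congr rfl fun i _ => by congr 1; ring
    rw [hIccj, ENNReal.ofReal_mul (hμ'pos _),
      ENNReal.ofReal_sum_of_nonneg fun i _ => hμpos _]
  -- lift of U'
  have hU'lift : ∀ k : ℕ, ENNReal.ofReal (U' (-(k : ℤ))) = ∑' q : ℕ, N q (-(k : ℤ)) := by
    intro k
    have hzero : ∀ q : ℕ, q ∉ Finset.range (k + 1) → μ'n q (-(k : ℤ)) = 0 := by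
      intro q hq
      simp only [Finset.mem_range, not_lt] at hq
      exact hNsupp q _ (by omega)
    have hsm : Summable fun q : ℕ => μ'n q (-(k : ℤ)) := summable_of_ne_finset_zero hzero
    rw [hU', ENNReal.ofReal_tsum_of_nonneg (fun q => hNpos q _) hsm]
  have hU'pos : ∀ t : ℤ, 0 ≤ U' t := by
    intro t; rw [hU']; exact tsum_nonneg fun q => hNpos q t
  -- mass of N along nonpositive integers
  have hNmassneg : ∀ q : ℕ, (∑' k : ℕ, N q (-(k : ℤ))) ≤ 1 := by
    intro q
    refine le_trans ?_ (hNmass q)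
    exact tsum_comp_le_tsum_of_injective (fun a b h => by omega) (N q)
  -- mass of m' over the negative integers
  have hm'nat : (∑' j : ℕ, m' (-(j : ℤ) - 1)) = 1 := by
    rw [← hm'mass]
    refine Function.Injective.tsum_eq (g := fun j : ℕ => -(j : ℤ) - 1)
      (fun a b h => by simpa using h) ?_
    intro t ht
    have hμ't : μ' t ≠ 0 := by
      intro h
      refine ht ?_
      show m' t = 0
      rw [hm']
      simp [h]
    have htneg : t < 0 := by
      by_contra h
      exact hμ't (hμ'supp t (by omega))
    exact ⟨(-t - 1).toNat, by show -(((-t - 1).toNat : ℤ)) - 1 = t; omega⟩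
  -- recursion along nonpositive integers
  have hNrecNat : ∀ q : ℕ, ∀ l : ℕ,
      N (q + 1) (-(l : ℤ)) = ∑' k : ℕ, N q (-(k : ℤ)) * m' ((k : ℤ) - l) := by
    intro q l
    rw [hNrec q]
    have := Function.Injective.tsum_eq (g := fun k : ℕ => -(k : ℤ))
      (f := fun κ : ℤ => N q κ * m' (-(l : ℤ) - κ)) (fun a b h => by simpa using h) ?_
    · rw [← this]
      refine tsum_congr fun k => ?_
      congr 1
      congr 1
      ring
    · intro κ hκ
      have h1 : μ'n q κ ≠ 0 := by
        simp only [Function.mem_support, hN] at hκ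
        intro h
        exact hκ (by rw [h]; simp)
      have hκle : κ ≤ -(q : ℤ) := by
        by_contra h
        exact h1 (hNsupp q κ (by omega))
      exact ⟨(-κ).toNat, by show -(((-κ).toNat : ℤ)) = κ; omega⟩
  -- the sequences A and S
  obtain ⟨A, hA⟩ : ∃ A : ℕ → ℝ≥0∞, ∀ q : ℕ, A q = ∑' k : ℕ, N q (-(k : ℤ)) * T k :=
    ⟨_, fun _ => rfl⟩
  obtain ⟨S, hS⟩ : ∃ S : ℕ → ℝ≥0∞, ∀ q : ℕ, S q = ∑' k : ℕ, N q (-(k : ℤ)) * R k :=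
    ⟨_, fun _ => rfl⟩
  have hA0 : A 0 = T 0 := by
    rw [hA]
    have h1 : ∀ k : ℕ, N 0 (-(k : ℤ)) * T k = if k = 0 then T 0 else 0 := by
      intro k
      rcases eq_or_ne k 0 with rfl | h
      · simp only [hN, hμ'n0]
        norm_num
      · rw [if_neg h]
        simp only [hN, hμ'n0]
        rw [if_neg (by omega : ¬(-(k : ℤ) = 0))]
        simp
    rw [tsum_congr h1, tsum_eq_single 0 (fun b hb => if_neg hb), if_pos rfl]
  have hAle : ∀ q : ℕ, A q ≤ T q := by
    intro q
    rw [hA]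
    calc (∑' k : ℕ, N q (-(k : ℤ)) * T k) ≤ ∑' k : ℕ, N q (-(k : ℤ)) * T q := by
          refine ENNReal.tsum_le_tsum fun k => ?_
          rcases le_or_gt q k with h | h
          · exact mul_le_mul_right (hTanti q k h) _
          · have hz : μ'n q (-(k : ℤ)) = 0 := hNsupp q _ (by omega)
            simp [hN, hz]
      _ = (∑' k : ℕ, N q (-(k : ℤ))) * T q := ENNReal.tsum_mul_right
      _ ≤ 1 * T q := mul_le_mul_left (hNmassneg q) _
      _ = T q := one_mul _
  -- the key step identity
  have hstep : ∀ q : ℕ, A q = S q + A (q + 1) := by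
    intro q
    have hTexp : ∀ k : ℕ, T k = ∑' j : ℕ, m' (-(j : ℤ) - 1) *
        ((∑ i ∈ Finset.range (j + 1), m ((n : ℤ) + 1 + k + i)) + T (k + j + 1)) := by
      intro k
      calc T k = 1 * T k := (one_mul _).symm
        _ = (∑' j : ℕ, m' (-(j : ℤ) - 1)) * T k := by rw [hm'nat]
        _ = ∑' j : ℕ, m' (-(j : ℤ) - 1) * T k := ENNReal.tsum_mul_right.symm
        _ = _ := tsum_congr fun j => by rw [hTsplit k j]
    calc A q = ∑' k : ℕ, N q (-(k : ℤ)) * T k := hA q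
      _ = ∑' k : ℕ, ∑' j : ℕ, N q (-(k : ℤ)) * (m' (-(j : ℤ) - 1) *
            ((∑ i ∈ Finset.range (j + 1), m ((n : ℤ) + 1 + k + i)) + T (k + j + 1))) := by
          refine tsum_congr fun k => ?_
          rw [hTexp k, ENNReal.tsum_mul_left]
      _ = ∑' k : ℕ, ∑' j : ℕ,
            (N q (-(k : ℤ)) * (m' (-(j : ℤ) - 1) * ∑ i ∈ Finset.range (j + 1), m ((n : ℤ) + 1 + k + i))
            + N q (-(k : ℤ)) * (m' (-(j : ℤ) - 1) * T (k + j + 1))) := by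
          refine tsum_congr fun k => tsum_congr fun j => ?_
          ring
      _ = (∑' k : ℕ, ∑' j : ℕ, N q (-(k : ℤ)) *
              (m' (-(j : ℤ) - 1) * ∑ i ∈ Finset.range (j + 1), m ((n : ℤ) + 1 + k + i)))
          + ∑' k : ℕ, ∑' j : ℕ, N q (-(k : ℤ)) * (m' (-(j : ℤ) - 1) * T (k + j + 1)) := by
          rw [← ENNReal.tsum_add]
          exact tsum_congr fun k => ENNReal.tsum_add
      _ = S q + A (q + 1) := by
          congr 1
          · rw [hS]
            refine tsum_congr fun k => ?_
            rw [hRdef, ENNReal.tsum_mul_left]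
          · rw [hA]
            calc ∑' k : ℕ, ∑' j : ℕ, N q (-(k : ℤ)) * (m' (-(j : ℤ) - 1) * T (k + j + 1))
                = ∑' k : ℕ, ∑' l : ℕ, N q (-(k : ℤ)) * (m' ((k : ℤ) - l) * T l) := by
                  refine tsum_congr fun k => ?_
                  have hinj : Function.Injective (fun j : ℕ => k + j + 1) := fun a b h => by simpa using h
                  have hsupp2 : Function.support
                      (fun l : ℕ => N q (-(k : ℤ)) * (m' ((k : ℤ) - l) * T l)) ⊆
                      Set.range (fun j : ℕ => k + j + 1) := by
                    intro l hl
                    have hμ'kl : μ' ((k : ℤ) - l) ≠ 0 := by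
                      simp only [Function.mem_support, hm'] at hl
                      intro h
                      apply hl
                      rw [h]
                      simp
                    have : (k : ℤ) - l < 0 := by
                      by_contra h
                      exact hμ'kl (hμ'supp _ (by omega))
                    exact ⟨l - k - 1, by show k + (l - k - 1) + 1 = l; omega⟩
                  rw [← Function.Injective.tsum_eq hinj hsupp2]
                  refine tsum_congr fun j => ?_
                  have harg : ((k : ℤ) - ((k + j + 1 : ℕ) : ℤ)) = -(j : ℤ) - 1 := by
                    push_cast; ring
                  rw [harg]
              _ = ∑' l : ℕ, ∑' k : ℕ, N q (-(k : ℤ)) * (m' ((k : ℤ) - l) * T l) :=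
                  ENNReal.tsum_comm
              _ = ∑' l : ℕ, N (q + 1) (-(l : ℤ)) * T l := by
                  refine tsum_congr fun l => ?_
                  calc (∑' k : ℕ, N q (-(k : ℤ)) * (m' ((k : ℤ) - l) * T l))
                      = (∑' k : ℕ, N q (-(k : ℤ)) * m' ((k : ℤ) - l)) * T l := by
                        rw [← ENNReal.tsum_mul_right]
                        exact tsum_congr fun k => (mul_assoc _ _ _).symm
                    _ = N (q + 1) (-(l : ℤ)) * T l := by rw [hNrecNat q l]
  -- telescoping
  have hpartial : ∀ M : ℕ, (∑ q ∈ Finset.range M, S q) + A M = A 0 := by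
    intro M
    induction M with
    | zero => simp
    | succ M ih => rw [Finset.sum_range_succ, add_assoc, ← hstep M, ih]
  have htsumS : (∑' q : ℕ, S q) = T 0 := by
    rw [← hA0]
    refine le_antisymm ?_ ?_
    · refine ENNReal.tsum_le_of_sum_range_le fun M => ?_
      rw [← hpartial M]
      exact le_self_add
    · have hle : ∀ M : ℕ, A 0 ≤ (∑' q : ℕ, S q) + T M := by
        intro M
        rw [← hpartial M]
        exact add_le_add (ENNReal.sum_le_tsum _) (hAle M)
      have htt : Tendsto (fun M : ℕ => (∑' q : ℕ, S q) + T M) atTop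
          (nhds ((∑' q : ℕ, S q) + 0)) := Tendsto.const_add _ hTtendsto
      rw [add_zero] at htt
      exact ge_of_tendsto' htt hle
  -- main identity in ℝ≥0∞
  have hmain : (∑' k : ℕ, (∑' q : ℕ, N q (-(k : ℤ))) * R k) = T 0 := by
    calc (∑' k : ℕ, (∑' q : ℕ, N q (-(k : ℤ))) * R k)
        = ∑' k : ℕ, ∑' q : ℕ, N q (-(k : ℤ)) * R k :=
          tsum_congr fun k => ENNReal.tsum_mul_right.symm
      _ = ∑' q : ℕ, ∑' k : ℕ, N q (-(k : ℤ)) * R k := ENNReal.tsum_comm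
      _ = ∑' q : ℕ, S q := tsum_congr fun q => (hS q).symm
      _ = T 0 := htsumS
  -- final conversion back to ℝ
  have hfin : ∀ k : ℕ, ENNReal.ofReal (U' (-(k : ℤ)) * ρ ((n : ℤ) + k)) ≠ ∞ :=
    fun k => ENNReal.ofReal_ne_top
  calc (∑' k : ℕ, U' (-(k : ℤ)) * ρ ((n : ℤ) + k))
      = ∑' k : ℕ, (ENNReal.ofReal (U' (-(k : ℤ)) * ρ ((n : ℤ) + k))).toReal := by
        refine tsum_congr fun k => ?_
        rw [ENNReal.toReal_ofReal (mul_nonneg (hU'pos _) (hρpos k))]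
    _ = (∑' k : ℕ, ENNReal.ofReal (U' (-(k : ℤ)) * ρ ((n : ℤ) + k))).toReal :=
        (ENNReal.tsum_toReal_eq hfin).symm
    _ = (T 0).toReal := by
        congr 1
        calc (∑' k : ℕ, ENNReal.ofReal (U' (-(k : ℤ)) * ρ ((n : ℤ) + k)))
            = ∑' k : ℕ, (∑' q : ℕ, N q (-(k : ℤ))) * R k := by
              refine tsum_congr fun k => ?_
              rw [ENNReal.ofReal_mul (hU'pos _), hU'lift k, hRlift k]
          _ = T 0 := hmain
    _ = ∑' j : ℕ, μ ((n : ℤ) + 1 + j) := by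
        rw [hT 0, ENNReal.tsum_toReal_eq fun j => ENNReal.ofReal_ne_top]
        refine tsum_congr fun j => ?_
        rw [show (n : ℤ) + 1 + ((0 : ℕ) : ℤ) + j = (n : ℤ) + 1 + j by push_cast; ring]
        exact ENNReal.toReal_ofReal (hμpos _)
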